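/- Let κ be a cardinal of uncountable cofinality and let X be a subspace of the Sorgenfrey line ℝₗ such that the square X × X (with the product topology) contains a discrete subspace Γ ⊆ X × X of cardinality |Γ| = κ. If a topological group G contains a subspace homeomorphic to X, then G contains a discrete subspace of cardinality κ. -/

import Mathlib

open Set Topology

def SorgenfreyLine : Type := ℝ

notation "ℝₗ" => SorgenfreyLine

noncomputable instance : Field ℝₗ := inferInstanceAs (Field ℝ)

noncomputable instance : LinearOrder ℝₗ := inferInstanceAs (LinearOrder ℝ)

instance : IsStrictOrderedRing ℝₗ := inferInstanceAs (IsStrictOrderedRing ℝ)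

instance : TopologicalSpace ℝₗ :=
  TopologicalSpace.generateFrom {s : Set ℝₗ | ∃ a b : ℝₗ, a < b ∧ s = Set.Ico a b}

/-- The spread of a topological space: the supremum of cardinalities of discrete subspaces. -/
noncomputable def spread (X : Type*) [TopologicalSpace X] : Cardinal :=
  sSup {c : Cardinal | ∃ D : Set X, DiscreteTopology D ∧ Cardinal.mk D = c}

def Cometrizable (Y : Type*) [t : TopologicalSpace Y] : Prop :=
  ∃ τ : TopologicalSpace Y, t ≤ τ ∧ @TopologicalSpace.MetrizableSpace Y τ ∧
    ∀ y : Y, ∀ U ∈ nhds y, ∃ V ∈ nhds y, V ⊆ U ∧ IsClosed[τ] V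

def IsKDense {X : Type*} [TopologicalSpace X] (D : Set X) : Prop :=
  ∀ K : Set X, IsCompact K → ∃ K' : Set X, IsCompact K' ∧ K ⊆ K' ∧ K' ⊆ closure (D ∩ K')

def KSeparable (X : Type*) [TopologicalSpace X] : Prop :=
  ∃ D : Set X, D.Countable ∧ IsKDense D

noncomputable instance : Archimedean ℝₗ := inferInstanceAs (Archimedean ℝ)
noncomputable instance : FloorRing ℝₗ := inferInstanceAs (FloorRing ℝ)

lemma sorg_isOpen_Ico (a b : ℝₗ) : IsOpen (Ico a b) := by
  rcases le_or_gt b a with hle | hlt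
  · rw [Ico_eq_empty (fun hab => absurd hle (not_le.2 hab))]; exact isOpen_empty
  · exact TopologicalSpace.isOpen_generateFrom_of_mem ⟨a, b, hlt, rfl⟩

lemma sorg_exists_Ico_subset {x : ℝₗ} {U : Set ℝₗ} (h : U ∈ 𝓝 x) :
    ∃ δ : ℝₗ, 0 < δ ∧ Ico x (x + δ) ⊆ U := by
  rcases mem_nhds_iff.1 h with ⟨V, hVU, hV, hxV⟩
  have hV' : TopologicalSpace.GenerateOpen {s : Set ℝₗ | ∃ a b : ℝₗ, a < b ∧ s = Set.Ico a b} V := hV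
  have key : ∀ s : Set ℝₗ, TopologicalSpace.GenerateOpen
      {s : Set ℝₗ | ∃ a b : ℝₗ, a < b ∧ s = Set.Ico a b} s →
      ∀ y ∈ s, ∃ δ : ℝₗ, 0 < δ ∧ Ico y (y + δ) ⊆ s := by
    intro s hs
    induction hs with
    | basic u hu =>
        obtain ⟨a, b, hab, rfl⟩ := hu
        intro y hy
        refine ⟨b - y, sub_pos.2 hy.2, fun z hz => ⟨le_trans hy.1 hz.1, ?_⟩⟩
        have := hz.2; linarith
    | univ => exact fun y _ => ⟨1, one_pos, fun z _ => mem_univ z⟩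
    | inter u v _ _ ihu ihv =>
        intro y hy
        obtain ⟨δ₁, h₁, hs₁⟩ := ihu y hy.1
        obtain ⟨δ₂, h₂, hs₂⟩ := ihv y hy.2
        refine ⟨min δ₁ δ₂, lt_min h₁ h₂, fun z hz => ⟨?_, ?_⟩⟩
        · exact hs₁ ⟨hz.1, lt_of_lt_of_le hz.2 (by gcongr; exact min_le_left _ _)⟩
        · exact hs₂ ⟨hz.1, lt_of_lt_of_le hz.2 (by gcongr; exact min_le_right _ _)⟩
    | sUnion S _ ih =>
        intro y hy
        obtain ⟨t, htS, hyt⟩ := hy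
        obtain ⟨δ, hδ, hsub⟩ := ih t htS y hyt
        exact ⟨δ, hδ, fun z hz => ⟨t, htS, hsub hz⟩⟩
  obtain ⟨δ, hδ, hsub⟩ := key V hV' x hxV
  exact ⟨δ, hδ, hsub.trans hVU⟩

lemma aux_mul {G : Type*} [Group G] [TopologicalSpace G] [IsTopologicalGroup G] {P : Set G}
    (hP : IsOpen P) {d b : G} (h : d * b ∈ P) :
    ∃ W Q : Set G, IsOpen W ∧ IsOpen Q ∧ d ∈ W ∧ b ∈ Q ∧ ∀ w ∈ W, ∀ q ∈ Q, w * q ∈ P := by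
  have hopen : IsOpen {p : G × G | p.1 * p.2 ∈ P} := hP.preimage continuous_mul
  obtain ⟨u, v, hu, hv, hdu, hbv, huv⟩ := isOpen_prod_iff.1 hopen d b h
  exact ⟨u, v, hu, hv, hdu, hbv, fun w hw q hq => huv (mk_mem_prod hw hq)⟩

lemma aux_fiber {α : Type} {ι : Type} [Countable ι] (f : α → ι) {κ : Cardinal.{0}}
    (hκ : Cardinal.aleph0 < κ.ord.cof) (hA : Cardinal.mk α = κ) :
    ∃ i, Cardinal.mk {x // f x = i} = κ := by
  by_contra hc
  push_neg at hc
  have h1 : ∀ i, Cardinal.mk {x // f x = i} < κ := fun i =>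
    lt_of_le_of_ne (hA ▸ Cardinal.mk_subtype_le _) (hc i)
  have h2 : Cardinal.mk α = Cardinal.sum fun i => Cardinal.mk {x // f x = i} := by
    rw [← Cardinal.mk_sigma]
    exact Cardinal.mk_congr (Equiv.sigmaFiberEquiv f).symm
  have hι : Cardinal.mk ι ≤ Cardinal.aleph0 := Cardinal.mk_le_aleph0
  have h4 : (⨆ i, Cardinal.mk {x // f x = i}) < κ :=
    Ordinal.iSup_lt (lt_of_le_of_lt hι hκ) h1
  have hκinf : Cardinal.aleph0 < κ := hκ.trans_le (Ordinal.cof_ord_le κ)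
  have h5 : Cardinal.mk ι * (⨆ i, Cardinal.mk {x // f x = i}) < κ :=
    Cardinal.mul_lt_of_lt hκinf.le (hι.trans_lt hκinf) h4
  have : κ < κ := by
    calc κ = Cardinal.mk α := hA.symm
    _ = _ := h2
    _ ≤ Cardinal.mk ι * ⨆ i, Cardinal.mk {x // f x = i} := Cardinal.sum_le_mk_mul_iSup _
    _ < κ := h5
  exact lt_irrefl _ this

lemma aux_thin {α : Type} {ι : Type} [Countable ι] {κ : Cardinal.{0}}
    (hκ : Cardinal.aleph0 < κ.ord.cof)
    (A : Set α) (hA : Cardinal.mk A = κ) (f : α → ι) :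
    ∃ B : Set α, B ⊆ A ∧ Cardinal.mk B = κ ∧ ∃ i, ∀ p ∈ B, f p = i := by
  obtain ⟨i, hi⟩ := aux_fiber (fun p : A => f p.val) hκ hA
  refine ⟨Subtype.val '' {p : A | f p.val = i}, ?_, ?_, i, ?_⟩
  · rintro q ⟨p, _, rfl⟩; exact p.2
  · rw [Cardinal.mk_image_eq Subtype.val_injective]; exact hi
  · rintro q ⟨p, hp, rfl⟩; exact hp

lemma aux_box {K : Type*} [Field K] [LinearOrder K] [IsStrictOrderedRing K] [FloorRing K] {d a b : K} (hd : 0 < d)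
    (h : ⌊a / d⌋ = ⌊b / d⌋) : a < b + d := by
  have h1 : a / d < ⌊a / d⌋ + 1 := Int.lt_floor_add_one _
  have h2 : (⌊b / d⌋ : K) ≤ b / d := Int.floor_le _
  rw [h] at h1
  have h3 : a / d < b / d + 1 := lt_of_lt_of_le h1 (by linarith)
  have h4 : a < (b / d + 1) * d := (div_lt_iff₀ hd).1 h3
  calc a < (b / d + 1) * d := h4
  _ = b + d := by field_simp

/-- Let $\kappa$ be a cardinal of uncountable cofinality and $X$ a subspace of the Sorgenfrey
line whose square contains a discrete subspace of cardinality $\kappa$. If a topological group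
$G$ contains a subspace homeomorphic to $X$, then $G$ contains a discrete subspace of
cardinality $\kappa$. -/
theorem discrete_subspace_of_discrete_in_square {G : Type u} [Group G] [TopologicalSpace G]
    [IsTopologicalGroup G] (κ : Cardinal.{0}) (hκ : Cardinal.aleph0 < κ.ord.cof)
    (X : Set ℝₗ) (Γ : Set (X × X)) (hΓ : DiscreteTopology Γ) (hΓκ : Cardinal.mk Γ = κ)
    (S : Set G) (h : Nonempty (S ≃ₜ X)) :
    ∃ D : Set G, DiscreteTopology D ∧ Cardinal.mk D = Cardinal.lift.{u} κ := by
  classical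
  obtain ⟨e⟩ := h
  have hκinf : Cardinal.aleph0 < κ := hκ.trans_le (Ordinal.cof_ord_le κ)
  have hκ0 : κ ≠ 0 := by
    intro h0; rw [h0] at hκinf; exact absurd hκinf (by simp)
  set g : X → G := fun z => ((e.symm z : S) : G) with hgdef
  have hg_cont : Continuous g := continuous_subtype_val.comp e.symm.continuous
  -- (L1) open sets of X are traces of open sets of G through g
  have hopen : ∀ A : Set X, IsOpen A → ∃ P : Set G, IsOpen P ∧ ∀ z : X, (g z ∈ P ↔ z ∈ A) := by
    intro A hA
    have h1 : IsOpen (e.symm '' A) := e.symm.isOpenMap A hA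
    obtain ⟨P, hP, hPeq⟩ := isOpen_induced_iff.1 h1
    refine ⟨P, hP, fun z => ?_⟩
    have h2 : g z ∈ P ↔ e.symm z ∈ Subtype.val ⁻¹' P := Iff.rfl
    rw [h2, hPeq]
    exact e.symm.injective.mem_set_image
  -- (L2) right-sided continuity of g
  have hright : ∀ (P : Set G) (z : X), IsOpen P → g z ∈ P →
      ∃ δ : ℝₗ, 0 < δ ∧ ∀ w : X, (w : ℝₗ) ∈ Ico (z : ℝₗ) ((z : ℝₗ) + δ) → g w ∈ P := by
    intro P z hP hzP
    obtain ⟨B, hB, hBeq⟩ := isOpen_induced_iff.1 (hP.preimage hg_cont)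
    have hzB : (z : ℝₗ) ∈ B := by
      have h3 : z ∈ Subtype.val ⁻¹' B := by rw [hBeq]; exact hzP
      exact h3
    obtain ⟨δ, hδ, hsub⟩ := sorg_exists_Ico_subset (hB.mem_nhds hzB)
    refine ⟨δ, hδ, fun w hw => ?_⟩
    have h4 : w ∈ Subtype.val ⁻¹' B := hsub hw
    rw [hBeq] at h4; exact h4
  -- (L3) separation from the discreteness of Γ
  have hsep : ∀ p : X × X, p ∈ Γ → ∃ δ : ℝₗ, 0 < δ ∧ ∀ q ∈ Γ,
      (q.1 : ℝₗ) ∈ Ico (p.1 : ℝₗ) ((p.1 : ℝₗ) + δ) →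
      (q.2 : ℝₗ) ∈ Ico (p.2 : ℝₗ) ((p.2 : ℝₗ) + δ) → q = p := by
    intro p hp
    have h1 : IsOpen ({⟨p, hp⟩} : Set Γ) := isOpen_discrete _
    obtain ⟨O, hO, hOeq⟩ := isOpen_induced_iff.1 h1
    have hpO : p ∈ O := by
      have h2 : (⟨p, hp⟩ : Γ) ∈ Subtype.val ⁻¹' O := by rw [hOeq]; rfl
      exact h2
    have hmem : O ∈ 𝓝 p := hO.mem_nhds hpO
    obtain ⟨U, hU, V, hV, hUV⟩ := mem_nhds_prod_iff.1 hmem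
    obtain ⟨t₁, ht₁, hsub₁⟩ := (mem_nhds_subtype _ _ _).1 hU
    obtain ⟨t₂, ht₂, hsub₂⟩ := (mem_nhds_subtype _ _ _).1 hV
    obtain ⟨δ₁, hδ₁, hIco₁⟩ := sorg_exists_Ico_subset ht₁
    obtain ⟨δ₂, hδ₂, hIco₂⟩ := sorg_exists_Ico_subset ht₂
    refine ⟨min δ₁ δ₂, lt_min hδ₁ hδ₂, fun q hq h1' h2' => ?_⟩
    have hq1 : q.1 ∈ U := hsub₁ (hIco₁ ⟨h1'.1, lt_of_lt_of_le h1'.2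
      (add_le_add_right (min_le_left _ _) _)⟩)
    have hq2 : q.2 ∈ V := hsub₂ (hIco₂ ⟨h2'.1, lt_of_lt_of_le h2'.2
      (add_le_add_right (min_le_right _ _) _)⟩)
    have hqO : q ∈ O := hUV (mk_mem_prod hq1 hq2)
    have h5 : (⟨q, hq⟩ : Γ) ∈ Subtype.val ⁻¹' O := hqO
    rw [hOeq] at h5
    exact congrArg Subtype.val h5
  -- Stage 1: uniformize the separation radius to a common rational ε₁
  choose! ε hε0 hεsep using hsep
  have hrat : ∀ p : X × X, p ∈ Γ → ∃ rr : ℚ, (0 : ℝₗ) < (rr : ℝₗ) ∧ (rr : ℝₗ) < ε p := by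
    intro p hp
    obtain ⟨rr, h1, h2⟩ := exists_rat_btwn (hε0 p hp)
    exact ⟨rr, h1, h2⟩
  choose! r hr0 hrε using hrat
  obtain ⟨Γ₁', hΓ₁'Γ, hΓ₁'κ, r₀, hr₀⟩ := aux_thin hκ Γ hΓκ r
  have hΓ₁'ne : Nonempty Γ₁' := Cardinal.mk_ne_zero_iff.1 (by rw [hΓ₁'κ]; exact hκ0)
  obtain ⟨⟨p₀, hp₀⟩⟩ := hΓ₁'ne
  set ε₁ : ℝₗ := (r₀ : ℝₗ) with hε₁def
  have hε₁pos : 0 < ε₁ := by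
    have := hr0 p₀ (hΓ₁'Γ hp₀)
    rwa [hr₀ p₀ hp₀] at this
  have hsep₁ : ∀ p ∈ Γ₁', ∀ q ∈ Γ,
      (q.1 : ℝₗ) ∈ Ico (p.1 : ℝₗ) ((p.1 : ℝₗ) + ε₁) →
      (q.2 : ℝₗ) ∈ Ico (p.2 : ℝₗ) ((p.2 : ℝₗ) + ε₁) → q = p := by
    intro p hp q hq h1 h2
    have hpΓ := hΓ₁'Γ hp
    have hlt : ε₁ < ε p := by
      have := hrε p hpΓ; rwa [hr₀ p hp] at this
    exact hεsep p hpΓ q hq ⟨h1.1, h1.2.trans (by linarith)⟩ ⟨h2.1, h2.2.trans (by linarith)⟩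
  -- Stage 2: all points in one box of side ε₁/2
  obtain ⟨Γ₂, hΓ₂Γ₁, hΓ₂κ, k₀, hk₀⟩ := aux_thin hκ Γ₁' hΓ₁'κ
    (fun p : X × X => ((⌊(p.1 : ℝₗ) / (ε₁ / 2)⌋, ⌊(p.2 : ℝₗ) / (ε₁ / 2)⌋) : ℤ × ℤ))
  have hΓ₂Γ : Γ₂ ⊆ Γ := fun q hq => hΓ₁'Γ (hΓ₂Γ₁ hq)
  have hbox₂ : ∀ p ∈ Γ₂, ∀ q ∈ Γ₂,
      (q.1 : ℝₗ) < (p.1 : ℝₗ) + ε₁ ∧ (q.2 : ℝₗ) < (p.2 : ℝₗ) + ε₁ := by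
    intro p hp q hq
    have h1 := hk₀ p hp
    have h2 := hk₀ q hq
    rw [Prod.ext_iff] at h1 h2
    have hx := aux_box (half_pos hε₁pos) (h2.1.trans h1.1.symm)
    have hy := aux_box (half_pos hε₁pos) (h2.2.trans h1.2.symm)
    constructor <;> linarith
  have hkey : ∀ p ∈ Γ₂, ∀ q ∈ Γ₂,
      (p.1 : ℝₗ) ≤ (q.1 : ℝₗ) → (p.2 : ℝₗ) ≤ (q.2 : ℝₗ) → q = p := by
    intro p hp q hq h1 h2
    exact hsep₁ p (hΓ₂Γ₁ hp) q (hΓ₂Γ hq) ⟨h1, (hbox₂ p hp q hq).1⟩ ⟨h2, (hbox₂ p hp q hq).2⟩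
  -- the candidate discrete points
  set dd : X × X → G := fun p => g p.1 * (g p.2)⁻¹ with hdddef
  -- Main per-point step
  have hmain : ∀ p ∈ Γ₂, ∃ ρ : ℚ, (0 : ℝₗ) < (ρ : ℝₗ) ∧ ∃ N : Set G, IsOpen N ∧ dd p ∈ N ∧
      ∀ q ∈ Γ₂, dd q ∈ N → q = p ∨ (p.1 : ℝₗ) + (ρ : ℝₗ) ≤ (q.1 : ℝₗ) ∨
        (p.2 : ℝₗ) + (ρ : ℝₗ) ≤ (q.2 : ℝₗ) := by
    intro p hp
    have hA : IsOpen {z : X | (z : ℝₗ) ∈ Ico (p.1 : ℝₗ) ((p.1 : ℝₗ) + ε₁)} :=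
      (sorg_isOpen_Ico _ _).preimage continuous_subtype_val
    have hB : IsOpen {z : X | (z : ℝₗ) ∈ Ico (p.2 : ℝₗ) ((p.2 : ℝₗ) + ε₁)} :=
      (sorg_isOpen_Ico _ _).preimage continuous_subtype_val
    obtain ⟨P₀, hP₀, hP₀iff⟩ := hopen _ hA
    obtain ⟨Q₀, hQ₀, hQ₀iff⟩ := hopen _ hB
    have haP₀ : g p.1 ∈ P₀ := (hP₀iff _).2 ⟨le_refl _, by linarith⟩
    have hbQ₀ : g p.2 ∈ Q₀ := (hQ₀iff _).2 ⟨le_refl _, by linarith⟩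
    obtain ⟨W, Q', hW, hQ', hdW, hbQ', hWQ⟩ := aux_mul hP₀
      (show (g p.1 * (g p.2)⁻¹) * g p.2 ∈ P₀ by rwa [inv_mul_cancel_right])
    obtain ⟨W', P', hW', hP', heW', haP', hWP⟩ := aux_mul hQ₀
      (show (g p.2 * (g p.1)⁻¹) * g p.1 ∈ Q₀ by rwa [inv_mul_cancel_right])
    obtain ⟨δ, hδ, hδQ⟩ := hright (Q' ∩ Q₀) p.2 (hQ'.inter hQ₀) ⟨hbQ', hbQ₀⟩
    obtain ⟨δ', hδ', hδP⟩ := hright (P' ∩ P₀) p.1 (hP'.inter hP₀) ⟨haP', haP₀⟩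
    obtain ⟨ρ, hρ0, hρδ⟩ := exists_rat_btwn (show (0 : ℝₗ) < min δ δ' from lt_min hδ hδ')
    refine ⟨ρ, hρ0, W ∩ (fun u : G => u⁻¹) ⁻¹' W',
      hW.inter (hW'.preimage continuous_inv), ⟨hdW, ?_⟩, ?_⟩
    · show (g p.1 * (g p.2)⁻¹)⁻¹ ∈ W'
      rwa [mul_inv_rev, inv_inv]
    · intro q hq hqN
      by_cases hqp : q = p
      · exact Or.inl hqp
      right
      have hnotQ : g q.2 ∉ Q' ∩ Q₀ := by
        intro hgQ
        have haq : g q.1 ∈ P₀ := by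
          have h6 := hWQ _ hqN.1 _ hgQ.1
          rwa [inv_mul_cancel_right] at h6
        exact hqp (hkey p hp q hq ((hP₀iff _).1 haq).1 ((hQ₀iff _).1 hgQ.2).1)
      have hnotP : g q.1 ∉ P' ∩ P₀ := by
        intro hgP
        have hbq : g q.2 ∈ Q₀ := by
          have h7 := hWP _ hqN.2 _ hgP.1
          have h7' : (g q.1 * (g q.2)⁻¹)⁻¹ * g q.1 ∈ Q₀ := h7
          rwa [mul_inv_rev, inv_inv, inv_mul_cancel_right] at h7'
        exact hqp (hkey p hp q hq ((hP₀iff _).1 hgP.2).1 ((hQ₀iff _).1 hbq).1)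
      have hdich : ¬((q.1 : ℝₗ) < (p.1 : ℝₗ) ∧ (q.2 : ℝₗ) < (p.2 : ℝₗ)) := by
        rintro ⟨h1, h2⟩
        exact hqp (hkey q hq p hp h1.le h2.le).symm
      by_contra hcon
      push_neg at hcon
      obtain ⟨hc1, hc2⟩ := hcon
      have h1 : (q.1 : ℝₗ) < (p.1 : ℝₗ) := by
        by_contra hge; push_neg at hge
        exact hnotP (hδP q.1 ⟨hge, hc1.trans_le (add_le_add_right
          (hρδ.trans_le (min_le_right _ _)).le _)⟩)
      have h2 : (q.2 : ℝₗ) < (p.2 : ℝₗ) := by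
        by_contra hge; push_neg at hge
        exact hnotQ (hδQ q.2 ⟨hge, hc2.trans_le (add_le_add_right
          (hρδ.trans_le (min_le_left _ _)).le _)⟩)
      exact hdich ⟨h1, h2⟩
  -- Stage 3: uniformize ρ
  choose! ρf hρf Nf hNo hNm hNs using hmain
  obtain ⟨Γ₃, hΓ₃Γ₂, hΓ₃κ, ρ₀, hρ₀⟩ := aux_thin hκ Γ₂ hΓ₂κ ρf
  have hΓ₃ne : Nonempty Γ₃ := Cardinal.mk_ne_zero_iff.1 (by rw [hΓ₃κ]; exact hκ0)
  obtain ⟨⟨p₁, hp₁⟩⟩ := hΓ₃ne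
  have hρ₀pos : (0 : ℝₗ) < (ρ₀ : ℝₗ) := by
    have := hρf p₁ (hΓ₃Γ₂ hp₁)
    rwa [hρ₀ p₁ hp₁] at this
  -- Stage 4: all points in one box of side ρ₀/2
  obtain ⟨Γ₄, hΓ₄Γ₃, hΓ₄κ, m₀, hm₀⟩ := aux_thin hκ Γ₃ hΓ₃κ
    (fun p : X × X => ((⌊(p.1 : ℝₗ) / ((ρ₀ : ℝₗ) / 2)⌋, ⌊(p.2 : ℝₗ) / ((ρ₀ : ℝₗ) / 2)⌋) : ℤ × ℤ))
  have hΓ₄Γ₂ : Γ₄ ⊆ Γ₂ := fun q hq => hΓ₃Γ₂ (hΓ₄Γ₃ hq)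
  have hbox₄ : ∀ p ∈ Γ₄, ∀ q ∈ Γ₄,
      (q.1 : ℝₗ) < (p.1 : ℝₗ) + (ρ₀ : ℝₗ) ∧ (q.2 : ℝₗ) < (p.2 : ℝₗ) + (ρ₀ : ℝₗ) := by
    intro p hp q hq
    have h1 := hm₀ p hp
    have h2 := hm₀ q hq
    rw [Prod.ext_iff] at h1 h2
    have hx := aux_box (half_pos hρ₀pos) (h2.1.trans h1.1.symm)
    have hy := aux_box (half_pos hρ₀pos) (h2.2.trans h1.2.symm)
    constructor <;> linarith
  -- Final: D := dd '' Γ₄ is discrete of cardinality κ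
  have hiso : ∀ p ∈ Γ₄, ∀ q ∈ Γ₄, dd q ∈ Nf p → q = p := by
    intro p hp q hq hqN
    have hp₂ : p ∈ Γ₂ := hΓ₄Γ₂ hp
    rcases hNs p hp₂ q (hΓ₄Γ₂ hq) hqN with heq | hle | hle
    · exact heq
    · have := (hbox₄ p hp q hq).1
      rw [hρ₀ p (hΓ₄Γ₃ hp)] at hle
      linarith
    · have := (hbox₄ p hp q hq).2
      rw [hρ₀ p (hΓ₄Γ₃ hp)] at hle
      linarith
  have hinj : InjOn dd Γ₄ := by
    intro p hp q hq hpq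
    exact (hiso p hp q hq (hpq ▸ hNm p (hΓ₄Γ₂ hp))).symm
  refine ⟨dd '' Γ₄, ?_, ?_⟩
  · apply discreteTopology_iff_isOpen_singleton.2
    rintro ⟨x, hx⟩
    obtain ⟨p, hp, rfl⟩ := hx
    have hopenN : IsOpen (Subtype.val ⁻¹' (Nf p) : Set (dd '' Γ₄)) :=
      (hNo p (hΓ₄Γ₂ hp)).preimage continuous_subtype_val
    have hset : (Subtype.val ⁻¹' (Nf p) : Set (dd '' Γ₄)) =
        {⟨dd p, mem_image_of_mem dd hp⟩} := by
      ext ⟨u, hu⟩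
      simp only [mem_preimage, mem_singleton_iff, Subtype.mk.injEq]
      constructor
      · intro huN
        obtain ⟨q, hq, rfl⟩ := hu
        exact congrArg dd (hiso p hp q hq huN)
      · rintro rfl
        exact hNm p (hΓ₄Γ₂ hp)
    rw [← hset]
    exact hopenN
  · have him := Cardinal.mk_image_eq_of_injOn_lift dd Γ₄ hinj
    rw [Cardinal.lift_uzero] at him
    rw [him, hΓ₄κ]
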